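/- Let G be a connected simple graph on a finite vertex set V and let P : V → Fin k (k ≥ 1) be a surjective map. If G has exactly k − 1 cross edges with respect to P, then each cluster P⁻¹(r) induces a connected subgraph of G. -/

import Mathlib

open Matrix

variable {V : Type*}

/-- The set of cross edges of `G` with respect to the partition map `P`:
edges of `G` whose two endpoints lie in different clusters. -/
def crossEdges {k : ℕ} (G : SimpleGraph V) (P : V → Fin k) : Set (Sym2 V) :=
  {e | e ∈ G.edgeSet ∧ ¬ (Sym2.map P e).IsDiag}

/-- The quotient (reduced) graph of `G` under `P`: vertices are the `k` clusters,
and distinct clusters `r`, `s` are adjacent iff `G` has a cross edge with one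
endpoint in cluster `r` and the other in cluster `s`. -/
def quotientGraph {k : ℕ} (G : SimpleGraph V) (P : V → Fin k) : SimpleGraph (Fin k) where
  Adj r s := r ≠ s ∧ ∃ u v, G.Adj u v ∧ P u = r ∧ P v = s
  symm := by
    constructor
    rintro r s ⟨hrs, u, v, huv, hu, hv⟩
    exact ⟨hrs.symm, v, u, huv.symm, hv, hu⟩
  loopless := by
    constructor
    rintro r ⟨hrr, -⟩
    exact hrr rfl

/-- `P` has no parallel cross edges: distinct cross edges of `G` join distinct
(unordered) pairs of clusters. -/
def NoParallelCrossEdges {k : ℕ} (G : SimpleGraph V) (P : V → Fin k) : Prop :=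
  ∀ e₁ ∈ crossEdges G P, ∀ e₂ ∈ crossEdges G P, Sym2.map P e₁ = Sym2.map P e₂ → e₁ = e₂


private lemma walk_trichotomy {H : SimpleGraph V} {a b u v : V} (p : H.Walk u v) :
    (H.deleteEdges {s(a,b)}).Reachable u v ∨
    ((H.deleteEdges {s(a,b)}).Reachable u a ∧ (H.deleteEdges {s(a,b)}).Reachable b v) ∨
    ((H.deleteEdges {s(a,b)}).Reachable u b ∧ (H.deleteEdges {s(a,b)}).Reachable a v) := by
  induction p with
  | nil => exact Or.inl (SimpleGraph.Reachable.refl _)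
  | @cons x y z h p ih =>
    by_cases he : s(x, y) = (s(a, b) : Sym2 V)
    · rw [Sym2.eq_iff] at he
      rcases he with ⟨rfl, rfl⟩ | ⟨rfl, rfl⟩
      · rcases ih with h1 | ⟨h1, h2⟩ | ⟨h1, h2⟩
        · exact Or.inr (Or.inl ⟨SimpleGraph.Reachable.refl _, h1⟩)
        · exact Or.inl (h1.symm.trans h2)
        · exact Or.inl h2
      · rcases ih with h1 | ⟨h1, h2⟩ | ⟨h1, h2⟩
        · exact Or.inr (Or.inr ⟨SimpleGraph.Reachable.refl _, h1⟩)
        · exact Or.inl h2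
        · exact Or.inl (h1.symm.trans h2)
    · have hadj : (H.deleteEdges {s(a,b)}).Adj x y := by
        rw [SimpleGraph.deleteEdges_adj]
        exact ⟨h, by simpa using he⟩
      rcases ih with h1 | ⟨h1, h2⟩ | ⟨h1, h2⟩
      · exact Or.inl (hadj.reachable.trans h1)
      · exact Or.inr (Or.inl ⟨hadj.reachable.trans h1, h2⟩)
      · exact Or.inr (Or.inr ⟨hadj.reachable.trans h1, h2⟩)

private lemma card_components_deleteEdge [Finite V] (H : SimpleGraph V) (a b : V) :
    Nat.card (H.deleteEdges {s(a,b)}).ConnectedComponent ≤ Nat.card H.ConnectedComponent + 1 := by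
  classical
  haveI : Finite H.ConnectedComponent := Quot.finite _
  haveI := Fintype.ofFinite H.ConnectedComponent
  let φ : (H.deleteEdges {s(a,b)}).ConnectedComponent → H.ConnectedComponent :=
    SimpleGraph.ConnectedComponent.lift (fun v => H.connectedComponentMk v)
      (fun u v p _ => SimpleGraph.ConnectedComponent.sound
        ((SimpleGraph.Reachable.mono (SimpleGraph.deleteEdges_le _) ⟨p⟩)))
  let ψ : (H.deleteEdges {s(a,b)}).ConnectedComponent → Option H.ConnectedComponent :=
    fun C => if C = (H.deleteEdges {s(a,b)}).connectedComponentMk a then none else some (φ C)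
  have hinj : Function.Injective ψ := by
    intro C D hCD
    induction C using SimpleGraph.ConnectedComponent.ind with | _ u =>
    induction D using SimpleGraph.ConnectedComponent.ind with | _ v =>
    simp only [ψ] at hCD
    by_cases h1 : (H.deleteEdges {s(a,b)}).connectedComponentMk u
        = (H.deleteEdges {s(a,b)}).connectedComponentMk a <;>
      by_cases h2 : (H.deleteEdges {s(a,b)}).connectedComponentMk v
        = (H.deleteEdges {s(a,b)}).connectedComponentMk a
    · rw [h1, h2]
    · rw [if_pos h1, if_neg h2] at hCD; exact absurd hCD (by simp)
    · rw [if_neg h1, if_pos h2] at hCD; exact absurd hCD (by simp)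
    · rw [if_neg h1, if_neg h2, Option.some_inj] at hCD
      have hCD' : H.connectedComponentMk u = H.connectedComponentMk v := by
        simpa [φ] using hCD
      obtain ⟨p⟩ := SimpleGraph.ConnectedComponent.exact hCD'
      rcases walk_trichotomy (a := a) (b := b) p with hr | ⟨hr, _⟩ | ⟨_, hr⟩
      · exact SimpleGraph.ConnectedComponent.sound hr
      · exact absurd (SimpleGraph.ConnectedComponent.sound hr) h1
      · exact absurd (SimpleGraph.ConnectedComponent.sound hr.symm) h2
  calc Nat.card (H.deleteEdges {s(a,b)}).ConnectedComponent
      ≤ Nat.card (Option H.ConnectedComponent) := Nat.card_le_card_of_injective ψ hinj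
    _ = Nat.card H.ConnectedComponent + 1 := Finite.card_option

private lemma card_components_deleteEdges [Finite V] {s : Set (Sym2 V)} (hs : s.Finite) :
    ∀ H : SimpleGraph V,
      Nat.card (H.deleteEdges s).ConnectedComponent ≤ Nat.card H.ConnectedComponent + s.ncard := by
  refine Set.Finite.induction_on (motive := fun s _ => ∀ H : SimpleGraph V,
      Nat.card (H.deleteEdges s).ConnectedComponent ≤ Nat.card H.ConnectedComponent + s.ncard)
    s hs (fun H => by simp) ?_
  intro x t hx htf ih H
  have hrw : H.deleteEdges (insert x t) = (H.deleteEdges {x}).deleteEdges t := by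
    rw [SimpleGraph.deleteEdges_deleteEdges, Set.singleton_union]
  rw [hrw, Set.ncard_insert_of_notMem hx htf]
  calc Nat.card ((H.deleteEdges {x}).deleteEdges t).ConnectedComponent
      ≤ Nat.card (H.deleteEdges {x}).ConnectedComponent + t.ncard := ih _
    _ ≤ Nat.card H.ConnectedComponent + 1 + t.ncard := by
        gcongr
        induction x with
        | _ a b => exact card_components_deleteEdge H a b
    _ = Nat.card H.ConnectedComponent + (t.ncard + 1) := by omega

theorem clusters_connected_of_card_crossEdges [Fintype V] {k : ℕ} (hk : 1 ≤ k)
    (G : SimpleGraph V) (hG : G.Connected) (P : V → Fin k)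
    (hsurj : Function.Surjective P)
    (hcount : (crossEdges G P).ncard = k - 1) :
    ∀ r : Fin k, (G.induce (P ⁻¹' {r})).Connected := by
  classical
  intro r
  set H := G.deleteEdges (crossEdges G P) with hH
  haveI : Finite H.ConnectedComponent := Quot.finite _
  have hadjP : ∀ {u v : V}, H.Adj u v → P u = P v := by
    intro u v h
    rw [hH, SimpleGraph.deleteEdges_adj] at h
    by_contra hne
    exact h.2 ⟨(G.mem_edgeSet).mpr h.1, by simp [hne]⟩
  have hreachP : ∀ {u v : V}, H.Reachable u v → P u = P v := by
    intro u v h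
    obtain ⟨p⟩ := h
    induction p with
    | nil => rfl
    | cons h p ih => exact (hadjP h).trans ih
  let f : H.ConnectedComponent → Fin k :=
    SimpleGraph.ConnectedComponent.lift P (fun u v p _ => hreachP ⟨p⟩)
  have hfsurj : Function.Surjective f := by
    intro s
    obtain ⟨v, rfl⟩ := hsurj s
    exact ⟨H.connectedComponentMk v, rfl⟩
  haveI := hG.nonempty
  have hone : Nat.card G.ConnectedComponent = 1 := by
    haveI : Subsingleton G.ConnectedComponent :=
      ⟨SimpleGraph.ConnectedComponent.ind₂
        (fun u v => SimpleGraph.ConnectedComponent.sound (hG.preconnected u v))⟩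
    haveI : Nonempty G.ConnectedComponent :=
      ⟨G.connectedComponentMk (Classical.arbitrary V)⟩
    rw [Nat.card_eq_one_iff_unique]
    exact ⟨inferInstance, inferInstance⟩
  have hle : Nat.card H.ConnectedComponent ≤ k := by
    have h1 := card_components_deleteEdges (Set.toFinite (crossEdges G P)) G
    rw [hone, hcount] at h1
    rw [hH]
    omega
  have hge : k ≤ Nat.card H.ConnectedComponent := by
    have h2 := Nat.card_le_card_of_surjective f hfsurj
    simpa [Nat.card_eq_fintype_card] using h2
  have hbij : Function.Bijective f :=
    hfsurj.bijective_of_nat_card_le (by simpa [Nat.card_eq_fintype_card] using hle)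
  have hreach : ∀ u v : V, P u = r → P v = r → H.Reachable u v := by
    intro u v hu hv
    have he : f (H.connectedComponentMk u) = f (H.connectedComponentMk v) := by
      simp only [f, SimpleGraph.ConnectedComponent.lift_mk, hu, hv]
    exact SimpleGraph.ConnectedComponent.exact (hbij.1 he)
  have key : ∀ (u v : V) (p : H.Walk u v) (hu : u ∈ P ⁻¹' {r}) (hv : v ∈ P ⁻¹' {r}),
      (G.induce (P ⁻¹' {r})).Reachable ⟨u, hu⟩ ⟨v, hv⟩ := by
    intro u v p
    induction p with
    | nil => intro hu hv; exact SimpleGraph.Reachable.refl _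
    | @cons x y z h p ih =>
      intro hu hv
      have hy : y ∈ P ⁻¹' {r} := by
        have hxy := hadjP h
        simp only [Set.mem_preimage, Set.mem_singleton_iff] at hu ⊢
        rw [← hxy]
        exact hu
      have hadj : (G.induce (P ⁻¹' {r})).Adj ⟨x, hu⟩ ⟨y, hy⟩ := by
        have hGxy : G.Adj x y := by
          rw [hH, SimpleGraph.deleteEdges_adj] at h
          exact h.1
        exact hGxy
      exact hadj.reachable.trans (ih hy hv)
  rw [SimpleGraph.connected_iff]
  constructor
  · rintro ⟨u, hu⟩ ⟨v, hv⟩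
    obtain ⟨p⟩ := hreach u v (by simpa using hu) (by simpa using hv)
    exact key u v p hu hv
  · obtain ⟨v, hv⟩ := hsurj r
    exact ⟨⟨v, by simp [hv]⟩⟩
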